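/- Let T > 0 and let g, φ : [0, T] → ℝ be continuous with g(t) ≥ 0 and φ(t) ≥ 0 for all t ∈ [0, T]. Suppose the function t ↦ g(t)² is differentiable on [0, T] and satisfies d/dt ( g(t)² ) ≤ 2 φ(t) g(t) for all t ∈ [0, T]. Then g(t) ≤ g(0) + ∫₀ᵗ φ(s) ds for all t ∈ [0, T]. -/

import Mathlib

/-- square-root Grönwall-type comparison lemma. If `g, φ ≥ 0` are
continuous on `[0,T]`, `t ↦ g(t)²` is differentiable on `[0,T]` with
`(g²)'(t) ≤ 2 φ(t) g(t)`, then `g(t) ≤ g(0) + ∫₀ᵗ φ(s) ds` on `[0,T]`. -/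
theorem stmt9 (T : ℝ) (hT : 0 < T) (g φ : ℝ → ℝ)
    (hg : ContinuousOn g (Set.Icc 0 T)) (hφ : ContinuousOn φ (Set.Icc 0 T))
    (hg0 : ∀ t ∈ Set.Icc (0:ℝ) T, 0 ≤ g t) (hφ0 : ∀ t ∈ Set.Icc (0:ℝ) T, 0 ≤ φ t)
    (hdiff : ∀ t ∈ Set.Icc (0:ℝ) T,
      DifferentiableWithinAt ℝ (fun τ => g τ ^ 2) (Set.Icc 0 T) t)
    (hineq : ∀ t ∈ Set.Icc (0:ℝ) T,
      derivWithin (fun τ => g τ ^ 2) (Set.Icc 0 T) t ≤ 2 * φ t * g t) :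
    ∀ t ∈ Set.Icc (0:ℝ) T, g t ≤ g 0 + ∫ s in (0:ℝ)..t, φ s := by
  -- continuous extension of φ to all of ℝ
  set ψ : ℝ → ℝ := fun t => φ (Set.projIcc 0 T hT.le t : ℝ) with hψdef
  have hψc : Continuous ψ := by
    have : Continuous ((Set.Icc (0:ℝ) T).restrict φ) :=
      continuousOn_iff_continuous_restrict.mp hφ
    exact this.comp (continuous_projIcc)
  have hψeq : ∀ t ∈ Set.Icc (0:ℝ) T, ψ t = φ t := by
    intro t ht
    simp [hψdef, Set.projIcc_of_mem hT.le ht]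
  have hψ0 : ∀ t, 0 ≤ ψ t := fun t => hφ0 _ (Set.projIcc 0 T hT.le t).2
  set Φ : ℝ → ℝ := fun t => ∫ s in (0:ℝ)..t, ψ s with hΦdef
  have hΦ' : ∀ x : ℝ, HasDerivAt Φ (ψ x) x := by
    intro x
    exact intervalIntegral.integral_hasDerivAt_right
      (hψc.intervalIntegrable _ _) (hψc.stronglyMeasurableAtFilter _ _) hψc.continuousAt
  have hΦ0 : ∀ x : ℝ, 0 ≤ x → 0 ≤ Φ x := by
    intro x hx
    exact intervalIntegral.integral_nonneg hx fun s _ => hψ0 s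
  have hΦint : ∀ t ∈ Set.Icc (0:ℝ) T, Φ t = ∫ s in (0:ℝ)..t, φ s := by
    intro t ht
    apply intervalIntegral.integral_congr
    intro s hs
    rw [Set.uIcc_of_le ht.1] at hs
    exact hψeq s ⟨hs.1, hs.2.trans ht.2⟩
  -- main ε-perturbed estimate
  have key : ∀ ε > (0:ℝ), ∀ t ∈ Set.Icc (0:ℝ) T,
      g t ≤ g 0 + ε + ε * t + Φ t := by
    intro ε hε t ht
    set c : ℝ → ℝ := fun x => g 0 + ε + ε * x + Φ x with hcdef
    have hcpos : ∀ x : ℝ, 0 ≤ x → 0 < c x := by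
      intro x hx
      have := hg0 0 ⟨le_rfl, hT.le⟩
      have := hΦ0 x hx
      have : 0 ≤ ε * x := mul_nonneg hε.le hx
      simp only [hcdef]
      linarith [hg0 0 ⟨le_rfl, hT.le⟩, hΦ0 x hx]
    have hc' : ∀ x : ℝ, HasDerivAt c (ε + ψ x) x := by
      intro x
      have h1 : HasDerivAt (fun x : ℝ => g 0 + ε + ε * x) ε x := by
        simpa using ((hasDerivAt_id x).const_mul ε).const_add (g 0 + ε)
      exact h1.add (hΦ' x)
    have hB' : ∀ x : ℝ, HasDerivAt (fun x => c x ^ 2) (2 * c x * (ε + ψ x)) x := by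
      intro x
      have := (hc' x).fun_pow 2
      simpa [mul_comm, mul_assoc, mul_left_comm] using this
    have main : ∀ x ∈ Set.Icc (0:ℝ) T, g x ^ 2 ≤ c x ^ 2 := by
      apply image_le_of_deriv_right_lt_deriv_boundary
        (f' := fun x => derivWithin (fun τ => g τ ^ 2) (Set.Icc 0 T) x)
        (hg.pow 2)
      · intro x hx
        have h1 : HasDerivWithinAt (fun τ => g τ ^ 2)
            (derivWithin (fun τ => g τ ^ 2) (Set.Icc 0 T) x) (Set.Icc 0 T) x :=
          (hdiff x (Set.Ico_subset_Icc_self hx)).hasDerivWithinAt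
        exact h1.mono_of_mem_nhdsWithin (Icc_mem_nhdsGE_of_mem hx)
      · have h0 : Φ 0 = 0 := by simp [hΦdef]
        have hgnn := hg0 0 ⟨le_rfl, hT.le⟩
        simp only [hcdef]
        simp only [Pi.pow_apply]
        nlinarith
      · exact hB'
      · intro x hx heq
        have hxI : x ∈ Set.Icc (0:ℝ) T := Set.Ico_subset_Icc_self hx
        have hgx : 0 ≤ g x := hg0 x hxI
        have hcx : 0 < c x := hcpos x hx.1
        have hgc : g x = c x := by simp only [Pi.pow_apply] at heq; nlinarith
        have h2 := hineq x hxI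
        have hψx : ψ x = φ x := hψeq x hxI
        calc derivWithin (fun τ => g τ ^ 2) (Set.Icc 0 T) x ≤ 2 * φ x * g x := h2
          _ < 2 * c x * (ε + ψ x) := by
              rw [hgc, hψx]
              have hφnn := hφ0 x hxI
              nlinarith
    have hsq := main t ht
    have hgt := hg0 t ht
    have hct : 0 < c t := hcpos t ht.1
    have hle : g t ≤ c t := by nlinarith
    have hceq : c t = g 0 + ε + ε * t + Φ t := rfl
    linarith
  -- pass to the limit ε → 0
  intro t ht
  rw [← hΦint t ht]
  have h1T : (0:ℝ) < 1 + T := by linarith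
  refine le_of_forall_pos_le_add ?_
  intro δ hδ
  have hε : (0:ℝ) < δ / (1 + T) := div_pos hδ h1T
  have := key _ hε t ht
  have hbound : δ / (1 + T) + δ / (1 + T) * t ≤ δ := by
    have h2 : δ / (1 + T) * (1 + t) ≤ δ / (1 + T) * (1 + T) :=
      mul_le_mul_of_nonneg_left (by linarith [ht.2]) hε.le
    have h3 : δ / (1 + T) * (1 + T) = δ := by field_simp
    nlinarith
  linarith
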